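/- In (ℝ^d)^n, the diagonals Δ_{Γ_1}, ..., Δ_{Γ_j} corresponding to the blocks of a connected graph Γ on n vertices intersect transversely: the codimension of their intersection equals the sum of their codimensions. -/

import Mathlib

/-- `v` is a cut vertex of `G`: its removal disconnects `G`, i.e. some two vertices
(other than `v`) are connected in `G` but no longer connected after deleting `v`. -/
def SimpleGraph.IsCutVertex {V : Type*} (G : SimpleGraph V) (v : V) : Prop :=
  ∃ (a b : V) (ha : a ≠ v) (hb : b ≠ v),
    G.Reachable a b ∧ ¬ (G.induce {u | u ≠ v}).Reachable ⟨a, ha⟩ ⟨b, hb⟩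

/-- A subgraph is biconnected if it is connected, has at least one edge
(so a single edge is biconnected but a single vertex is not), and has no cut vertex. -/
def SimpleGraph.Subgraph.Biconnected {V : Type*} {G : SimpleGraph V} (H : G.Subgraph) : Prop :=
  H.coe.Connected ∧ H.edgeSet.Nonempty ∧ ∀ v : H.verts, ¬ H.coe.IsCutVertex v

/-- A block of `G` is a maximal biconnected subgraph of `G`. -/
def SimpleGraph.IsBlock {V : Type*} (G : SimpleGraph V) (H : G.Subgraph) : Prop :=
  H.Biconnected ∧ ∀ H' : G.Subgraph, H'.Biconnected → H ≤ H' → H' = H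

/-- For a subset `S` of the vertices, the diagonal `Δ_S ⊆ (ℝ^d)^V` where all coordinates
indexed by elements of `S` agree. -/
def diagSubmodule (d : ℕ) {V : Type*} (S : Set V) :
    Submodule ℝ (V → EuclideanSpace ℝ (Fin d)) where
  carrier := {x | ∀ i ∈ S, ∀ j ∈ S, x i = x j}
  add_mem' := by
    intro a b ha hb i hi j hj
    simp only [Pi.add_apply, ha i hi j hj, hb i hi j hj]
  zero_mem' := fun i _ j _ => rfl
  smul_mem' := by
    intro c x hx i hi j hj
    simp only [Pi.smul_apply, hx i hi j hj]

namespace BlockProof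
open SimpleGraph

variable {V : Type*} {G : SimpleGraph V}

lemma bicon_two_verts {H : G.Subgraph} (hH : H.Biconnected) :
    ∃ a b, a ∈ H.verts ∧ b ∈ H.verts ∧ a ≠ b ∧ H.Adj a b := by
  obtain ⟨e, he⟩ := hH.2.1
  induction e with
  | h a b =>
    rw [Subgraph.mem_edgeSet] at he
    exact ⟨a, b, H.edge_vert he, H.edge_vert he.symm, (H.adj_sub he).ne, he⟩

lemma reach_of_eq {W : Type*} {Gr : SimpleGraph W} {a b : W} (h : a = b) : Gr.Reachable a b :=
  h ▸ Reachable.refl a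

/-- The graph `K` minus the vertex `v`. -/
abbrev Kdel (K : G.Subgraph) (v : K.verts) : SimpleGraph {u : K.verts | u ≠ v} :=
  K.coe.induce {u : K.verts | u ≠ v}

/-- The vertex set of the piece of `K` corresponding to component `c` of `K - v`,
including `v` itself. -/
def Sc (K : G.Subgraph) (v : K.verts) (c : (Kdel K v).ConnectedComponent) : Set V :=
  insert ↑v {x | ∃ (hx : x ∈ K.verts) (hne : (⟨x, hx⟩ : K.verts) ≠ v),
    (Kdel K v).connectedComponentMk ⟨⟨x, hx⟩, hne⟩ = c}

lemma mem_Sc_iff {K : G.Subgraph} {v : K.verts} {c : (Kdel K v).ConnectedComponent} {x : V} :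
    x ∈ Sc K v c ↔ x = ↑v ∨ ∃ (hx : x ∈ K.verts) (hne : (⟨x, hx⟩ : K.verts) ≠ v),
      (Kdel K v).connectedComponentMk ⟨⟨x, hx⟩, hne⟩ = c := Set.mem_insert_iff

lemma Sc_subset (K : G.Subgraph) (v : K.verts) (c : (Kdel K v).ConnectedComponent) :
    Sc K v c ⊆ K.verts := by
  rintro x (rfl | ⟨hx, -, -⟩)
  · exact v.2
  · exact hx

lemma v_mem_Sc (K : G.Subgraph) (v : K.verts) (c : (Kdel K v).ConnectedComponent) :
    ↑v ∈ Sc K v c := Set.mem_insert _ _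

lemma mem_Sc_of_mk {K : G.Subgraph} {v : K.verts} {c : (Kdel K v).ConnectedComponent}
    (p : {u : K.verts | u ≠ v}) (hp : (Kdel K v).connectedComponentMk p = c) :
    ↑↑p ∈ Sc K v c :=
  Set.mem_insert_iff.2 (Or.inr ⟨p.1.2, p.2, hp⟩)

lemma mk_of_mem_Sc {K : G.Subgraph} {v : K.verts} {c : (Kdel K v).ConnectedComponent}
    {x : V} (hx : x ∈ Sc K v c) (hxK : x ∈ K.verts) (hne : (⟨x, hxK⟩ : K.verts) ≠ v) :
    (Kdel K v).connectedComponentMk ⟨⟨x, hxK⟩, hne⟩ = c := by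
  rcases hx with rfl | ⟨hx', hne', hc⟩
  · exact absurd (Subtype.ext rfl) hne
  · exact hc

/-- The subgraph of `K` induced on `Sc K v c`. -/
def Kc (K : G.Subgraph) (v : K.verts) (c : (Kdel K v).ConnectedComponent) : G.Subgraph where
  verts := Sc K v c
  Adj a b := a ∈ Sc K v c ∧ b ∈ Sc K v c ∧ K.Adj a b
  adj_sub h := K.adj_sub h.2.2
  edge_vert h := h.1
  symm := ⟨fun a b h => ⟨h.2.1, h.1, h.2.2.symm⟩⟩

lemma Kc_le (K : G.Subgraph) (v : K.verts) (c : (Kdel K v).ConnectedComponent) :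
    Kc K v c ≤ K :=
  ⟨Sc_subset K v c, fun a b h => h.2.2⟩

lemma le_Kc_iff {K H : G.Subgraph} (hle : H ≤ K) {v : K.verts}
    {c : (Kdel K v).ConnectedComponent} :
    H ≤ Kc K v c ↔ H.verts ⊆ Sc K v c := by
  constructor
  · exact fun h => h.1
  · intro h
    exact ⟨h, fun a b hadj => ⟨h (H.edge_vert hadj), h (H.edge_vert hadj.symm), hle.2 hadj⟩⟩

lemma Kc_connected {K : G.Subgraph} (hK : K.coe.Connected) (v : K.verts)
    (c : (Kdel K v).ConnectedComponent) : (Kc K v c).coe.Connected := by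
  have hv : (↑v : V) ∈ (Kc K v c).verts := v_mem_Sc K v c
  rw [connected_iff]
  refine ⟨?_, ⟨⟨↑v, hv⟩⟩⟩
  have key : ∀ (x z : K.verts) (w : K.coe.Walk x z), v = z → ∀ (ha : ↑x ∈ Sc K v c),
      (Kc K v c).coe.Reachable ⟨↑x, ha⟩ ⟨↑v, hv⟩ := by
    intro x z w
    induction w with
    | nil =>
      intro hb ha
      subst hb
      exact reach_of_eq (Subtype.ext rfl)
    | @cons x y z h p ih =>
      intro hb ha
      subst hb
      by_cases hav : x = v
      · exact reach_of_eq (Subtype.ext (show (↑x : V) = ↑v from congrArg Subtype.val hav))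
      · by_cases huv : y = v
        · have hadj : (Kc K v c).coe.Adj ⟨↑x, ha⟩ ⟨↑v, hv⟩ := by
            have h2 : (Kc K v c).Adj ↑x ↑v := ⟨ha, hv, by rw [← huv]; exact h⟩
            exact h2
          exact hadj.reachable
        · have hmka : (Kdel K v).connectedComponentMk ⟨x, hav⟩ = c := mk_of_mem_Sc ha x.2 hav
          have hadj' : (Kdel K v).Adj ⟨x, hav⟩ ⟨y, huv⟩ := h
          have hmku : (Kdel K v).connectedComponentMk ⟨y, huv⟩ = c := by
            rw [← hmka]
            exact (ConnectedComponent.sound hadj'.reachable).symm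
          have hu : ↑y ∈ Sc K v c := mem_Sc_of_mk ⟨y, huv⟩ hmku
          have hadj : (Kc K v c).coe.Adj ⟨↑x, ha⟩ ⟨↑y, hu⟩ := by
            have h2 : (Kc K v c).Adj ↑x ↑y := ⟨ha, hu, h⟩
            exact h2
          exact (hadj.reachable).trans (ih rfl hu)
  intro x y
  obtain ⟨wx⟩ := hK.preconnected ⟨↑x, (Kc_le K v c).1 x.2⟩ v
  obtain ⟨wy⟩ := hK.preconnected ⟨↑y, (Kc_le K v c).1 y.2⟩ v
  have hx := key _ _ wx rfl x.2
  have hy := key _ _ wy rfl y.2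
  exact hx.trans hy.symm

/-- Lifting a subgraph avoiding `v` into `K - v`. -/
def avoidHom (K H : G.Subgraph) (hle : H ≤ K) (v : K.verts) (hv : (v : V) ∉ H.verts) :
    H.coe →g Kdel K v where
  toFun x := ⟨⟨x.1, hle.1 x.2⟩, fun h => hv (by
    have : (v : V) = x.1 := (congrArg Subtype.val h).symm
    rw [this]; exact x.2)⟩
  map_rel' h := hle.2 h

/-- Lifting `H - v` into `K - v` when `v ∈ H.verts`. -/
def avoidHom' (K H : G.Subgraph) (hle : H ≤ K) (v : K.verts) (hv : (v : V) ∈ H.verts) :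
    (H.coe.induce {u : H.verts | u ≠ ⟨↑v, hv⟩}) →g Kdel K v where
  toFun p := ⟨⟨p.1.1, hle.1 p.1.2⟩, fun h => p.2 (Subtype.ext (show ((p.1 : H.verts) : V) = ↑v from congrArg Subtype.val h))⟩
  map_rel' h := hle.2 h

lemma bicon_reach {H : G.Subgraph} (hH : H.Biconnected) (hle : H ≤ K) (v : K.verts)
    {a b : V} (haH : a ∈ H.verts) (hbH : b ∈ H.verts) (hav : a ≠ ↑v) (hbv : b ≠ ↑v) :
    (Kdel K v).Reachable ⟨⟨a, hle.1 haH⟩, fun h => hav (congrArg Subtype.val h)⟩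
      ⟨⟨b, hle.1 hbH⟩, fun h => hbv (congrArg Subtype.val h)⟩ := by
  by_cases hvH : (v : V) ∈ H.verts
  · have hnc := hH.2.2 ⟨↑v, hvH⟩
    have hr : H.coe.Reachable ⟨a, haH⟩ ⟨b, hbH⟩ := hH.1.preconnected _ _
    have ha' : (⟨a, haH⟩ : H.verts) ≠ ⟨↑v, hvH⟩ := fun h => hav (congrArg Subtype.val h)
    have hb' : (⟨b, hbH⟩ : H.verts) ≠ ⟨↑v, hvH⟩ := fun h => hbv (congrArg Subtype.val h)
    have hr' : (H.coe.induce {u : H.verts | u ≠ ⟨↑v, hvH⟩}).Reachable ⟨⟨a, haH⟩, ha'⟩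
        ⟨⟨b, hbH⟩, hb'⟩ := by
      by_contra hcon
      exact hnc ⟨⟨a, haH⟩, ⟨b, hbH⟩, ha', hb', hr, hcon⟩
    exact hr'.map (avoidHom' K H hle v hvH)
  · have hr : H.coe.Reachable ⟨a, haH⟩ ⟨b, hbH⟩ := hH.1.preconnected _ _
    exact hr.map (avoidHom K H hle v hvH)

lemma bicon_subset_Sc {K H : G.Subgraph} (hH : H.Biconnected) (hle : H ≤ K) (v : K.verts) :
    ∃ c, H.verts ⊆ Sc K v c := by
  obtain ⟨a₀, b₀, ha₀, hb₀, hne₀, -⟩ := bicon_two_verts hH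
  have hex : ∃ a, a ∈ H.verts ∧ a ≠ ↑v := by
    by_cases h : a₀ = ↑v
    · exact ⟨b₀, hb₀, fun hb => hne₀ (h.trans hb.symm)⟩
    · exact ⟨a₀, ha₀, h⟩
  obtain ⟨a, haH, hav⟩ := hex
  have haK : a ∈ K.verts := hle.1 haH
  have hane : (⟨a, haK⟩ : K.verts) ≠ v := fun h => hav (congrArg Subtype.val h)
  refine ⟨(Kdel K v).connectedComponentMk ⟨⟨a, haK⟩, hane⟩, ?_⟩
  intro b hbH
  by_cases hbv : b = ↑v
  · rw [hbv]; exact v_mem_Sc K v _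
  · have hr := bicon_reach hH hle v hbH haH hbv hav
    exact mem_Sc_of_mk ⟨⟨b, hle.1 hbH⟩, fun h => hbv (congrArg Subtype.val h)⟩
      (ConnectedComponent.sound hr)

lemma exists_not_mem_Sc {K : G.Subgraph} {v : K.verts} (hcut : K.coe.IsCutVertex v)
    (c : (Kdel K v).ConnectedComponent) : ∃ x, x ∈ K.verts ∧ x ∉ Sc K v c := by
  obtain ⟨a, b, ha, hb, hr, hnr⟩ := hcut
  have hne : ¬((Kdel K v).connectedComponentMk ⟨a, ha⟩ = c ∧
      (Kdel K v).connectedComponentMk ⟨b, hb⟩ = c) := by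
    rintro ⟨h1, h2⟩
    exact hnr (ConnectedComponent.exact (h1.trans h2.symm))
  rcases not_and_or.mp hne with h | h
  · exact ⟨↑a, a.2, fun hm => h (mk_of_mem_Sc hm a.2 ha)⟩
  · exact ⟨↑b, b.2, fun hm => h (mk_of_mem_Sc hm b.2 hb)⟩

lemma Sc_ncard_lt [Finite V] {K : G.Subgraph} {v : K.verts} (hcut : K.coe.IsCutVertex v)
    (c : (Kdel K v).ConnectedComponent) : (Sc K v c).ncard < K.verts.ncard := by
  obtain ⟨x, hxK, hxS⟩ := exists_not_mem_Sc hcut c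
  exact Set.ncard_lt_ncard ⟨Sc_subset K v c, fun hsup => hxS (hsup hxK)⟩ (Set.toFinite _)

/-- The set `Sc` minus `v`. -/
def Cc (K : G.Subgraph) (v : K.verts) (c : (Kdel K v).ConnectedComponent) : Set V :=
  {x | ∃ (hx : x ∈ K.verts) (hne : (⟨x, hx⟩ : K.verts) ≠ v),
    (Kdel K v).connectedComponentMk ⟨⟨x, hx⟩, hne⟩ = c}

lemma Sc_eq_insert (K : G.Subgraph) (v : K.verts) (c : (Kdel K v).ConnectedComponent) :
    Sc K v c = insert ↑v (Cc K v c) := rfl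

lemma v_not_mem_Cc (K : G.Subgraph) (v : K.verts) (c : (Kdel K v).ConnectedComponent) :
    (v : V) ∉ Cc K v c := by
  rintro ⟨hx, hne, -⟩
  exact hne (Subtype.ext rfl)

lemma Cc_eq_image (K : G.Subgraph) (v : K.verts) (c : (Kdel K v).ConnectedComponent) :
    Cc K v c = (fun p : {u : K.verts | u ≠ v} => (↑↑p : V)) ''
      {p | (Kdel K v).connectedComponentMk p = c} := by
  ext x
  constructor
  · rintro ⟨hx, hne, hc⟩
    exact ⟨⟨⟨x, hx⟩, hne⟩, hc, rfl⟩
  · rintro ⟨p, hp, rfl⟩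
    exact ⟨p.1.2, p.2, hp⟩

lemma sum_Sc_ncard [Finite V] (K : G.Subgraph) (v : K.verts)
    [Fintype ((Kdel K v).ConnectedComponent)] :
    ∑ c : (Kdel K v).ConnectedComponent, ((Sc K v c).ncard - 1) = K.verts.ncard - 1 := by
  classical
  haveI : Fintype {u : K.verts | u ≠ v} := Fintype.ofFinite _
  have h1 : ∀ c, (Sc K v c).ncard - 1 = (Cc K v c).ncard := by
    intro c
    rw [Sc_eq_insert, Set.ncard_insert_of_notMem (v_not_mem_Cc K v c) (Set.toFinite _)]
    omega
  have h2 : ∀ c : (Kdel K v).ConnectedComponent, (Cc K v c).ncard =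
      (Finset.univ.filter
        (fun p : {u : K.verts | u ≠ v} => (Kdel K v).connectedComponentMk p = c)).card := by
    intro c
    rw [Cc_eq_image, Set.ncard_image_of_injective _ (fun p q h => Subtype.ext (Subtype.ext h)),
      Set.ncard_eq_toFinset_card', Set.toFinset_setOf]
  haveI : Fintype K.verts := Fintype.ofFinite _
  have hc := Fintype.card_subtype_compl (fun u : K.verts => u = v)
  rw [Fintype.card_subtype_eq] at hc
  have h3 : Fintype.card {u : K.verts | u ≠ v} = K.verts.ncard - 1 := by
    calc Fintype.card {u : K.verts | u ≠ v}
        = Fintype.card {x : K.verts // ¬ x = v} := Fintype.card_congr (Equiv.refl _)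
      _ = Fintype.card K.verts - 1 := hc
      _ = K.verts.ncard - 1 := by rw [← Nat.card_eq_fintype_card, Nat.card_coe_set_eq]
  simp only [h1, h2]
  rw [← h3, ← Finset.card_univ]
  exact (Finset.card_eq_sum_card_fiberwise (fun x _ => Finset.mem_univ _)).symm

/-- `H` is a block of the subgraph `K`. -/
def BlockIn (K H : G.Subgraph) : Prop :=
  H.Biconnected ∧ H ≤ K ∧ ∀ H', H'.Biconnected → H' ≤ K → H ≤ H' → H' = H

lemma bicon_ncard [Finite V] {H : G.Subgraph} (hH : H.Biconnected) : 2 ≤ H.verts.ncard := by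
  obtain ⟨a, b, ha, hb, hab, -⟩ := bicon_two_verts hH
  have hsub : ({a, b} : Set V) ⊆ H.verts := by
    intro x hx; rcases hx with rfl | rfl; exacts [ha, hb]
  calc 2 = ({a, b} : Set V).ncard := (Set.ncard_pair hab).symm
  _ ≤ H.verts.ncard := Set.ncard_le_ncard hsub (Set.toFinite _)

noncomputable def blockFinset [Finite V] (K : G.Subgraph) : Finset G.Subgraph :=
  haveI : Finite G.Subgraph := by
    exact Finite.of_injective (fun H : G.Subgraph => (H.verts, H.Adj))
      (fun H₁ H₂ h => by
        simp only [Prod.mk.injEq] at h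
        exact Subgraph.ext h.1 h.2)
  (Set.toFinite {H | BlockIn K H}).toFinset

lemma mem_blockFinset [Finite V] {K H : G.Subgraph} :
    H ∈ blockFinset K ↔ BlockIn K H := Set.Finite.mem_toFinset _

lemma mem_Sc_ne_mk {K : G.Subgraph} {v : K.verts} {c c' : (Kdel K v).ConnectedComponent}
    {x : V} (hx : x ∈ Sc K v c) (hx' : x ∈ Sc K v c') (hxv : x ≠ ↑v) : c = c' := by
  have hxK : x ∈ K.verts := Sc_subset K v c hx
  have hne : (⟨x, hxK⟩ : K.verts) ≠ v := fun h => hxv (congrArg Subtype.val h)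
  rw [← mk_of_mem_Sc hx hxK hne, mk_of_mem_Sc hx' hxK hne]

lemma bicon_vert_ne {K H : G.Subgraph} (hH : H.Biconnected) (v : K.verts) :
    ∃ a, a ∈ H.verts ∧ a ≠ (v : V) := by
  obtain ⟨a₀, b₀, ha₀, hb₀, hne₀, -⟩ := bicon_two_verts hH
  by_cases h : a₀ = ↑v
  · exact ⟨b₀, hb₀, fun hb => hne₀ (h.trans hb.symm)⟩
  · exact ⟨a₀, ha₀, h⟩

lemma blockIn_Kc_iff {K H : G.Subgraph} {v : K.verts} {c : (Kdel K v).ConnectedComponent} :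
    BlockIn (Kc K v c) H ↔ BlockIn K H ∧ H.verts ⊆ Sc K v c := by
  constructor
  · rintro ⟨hb, hle, hmax⟩
    have hleK : H ≤ K := hle.trans (Kc_le K v c)
    refine ⟨⟨hb, hleK, ?_⟩, hle.1⟩
    intro H' hb' hle' hHH'
    obtain ⟨c', hsub'⟩ := bicon_subset_Sc hb' hle' v
    obtain ⟨a, haH, hav⟩ := bicon_vert_ne hb v
    have hc' : c' = c := mem_Sc_ne_mk (hsub' (hHH'.1 haH)) (hle.1 haH) hav
    exact hmax H' hb' ((le_Kc_iff hle').2 (hc' ▸ hsub')) hHH'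
  · rintro ⟨⟨hb, hle, hmax⟩, hsub⟩
    exact ⟨hb, (le_Kc_iff hle).2 hsub,
      fun H' hb' hle' hHH' => hmax H' hb' (hle'.trans (Kc_le K v c)) hHH'⟩

lemma edge_of_connected {K : G.Subgraph} (hK : K.coe.Connected)
    {a b : K.verts} (hab : a ≠ b) : K.edgeSet.Nonempty := by
  obtain ⟨w⟩ := hK.preconnected a b
  cases w with
  | nil => exact absurd rfl hab
  | cons h p => exact ⟨s(↑a, _), h⟩

lemma blockIn_self {K : G.Subgraph} (hb : K.Biconnected) {H : G.Subgraph} :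
    BlockIn K H ↔ H = K := by
  constructor
  · rintro ⟨hb', hle, hmax⟩
    exact (hmax K hb le_rfl hle).symm
  · rintro rfl
    exact ⟨hb, le_rfl, fun H' _ h1 h2 => le_antisymm h1 h2⟩

theorem sum_blockIn [Finite V] :
    ∀ (n : ℕ) (K : G.Subgraph), K.verts.ncard ≤ n → K.coe.Connected →
      ∑ H ∈ blockFinset K, (H.verts.ncard - 1) = K.verts.ncard - 1 := by
  intro n
  induction n with
  | zero =>
    intro K hn hK
    have := hK.nonempty
    have : 0 < K.verts.ncard := by
      rw [Set.ncard_pos (Set.toFinite _)]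
      obtain ⟨x⟩ := this
      exact ⟨↑x, x.2⟩
    omega
  | succ n ih =>
    intro K hn hK
    by_cases hsmall : K.verts.ncard < 2
    · have hempty : blockFinset K = ∅ := by
        rw [Finset.eq_empty_iff_forall_notMem]
        intro H hH
        rw [mem_blockFinset] at hH
        have h2 := bicon_ncard hH.1
        have hle := Set.ncard_le_ncard hH.2.1.1 (Set.toFinite _)
        omega
      rw [hempty]
      simp only [Finset.sum_empty]
      omega
    · push_neg at hsmall
      by_cases hcut : ∃ v : K.verts, K.coe.IsCutVertex v
      · obtain ⟨v, hv⟩ := hcut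
        classical
        haveI : Fintype ((Kdel K v).ConnectedComponent) := Fintype.ofFinite _
        haveI : Nonempty ((Kdel K v).ConnectedComponent) := by
          obtain ⟨a, b, ha, hb, -, -⟩ := hv
          exact ⟨(Kdel K v).connectedComponentMk ⟨a, ha⟩⟩
        -- the component assignment of a block
        have hBsub : ∀ H, BlockIn K H → ∃ c, H.verts ⊆ Sc K v c :=
          fun H hH => bicon_subset_Sc hH.1 hH.2.1 v
        set g : G.Subgraph → (Kdel K v).ConnectedComponent := fun H =>
          if h : ∃ c, H.verts ⊆ Sc K v c then h.choose else Classical.arbitrary _ with hg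
        have hgspec : ∀ H, BlockIn K H → ∀ c, H.verts ⊆ Sc K v c → g H = c := by
          intro H hH c hc
          have hex : ∃ c, H.verts ⊆ Sc K v c := ⟨c, hc⟩
          rw [hg]
          simp only [dif_pos hex]
          obtain ⟨a, haH, hav⟩ := bicon_vert_ne hH.1 v
          exact mem_Sc_ne_mk (hex.choose_spec haH) (hc haH) hav
        rw [← Finset.sum_fiberwise (blockFinset K) g (fun H => H.verts.ncard - 1)]
        have hfib : ∀ c, (blockFinset K).filter (fun H => g H = c) = blockFinset (Kc K v c) := by
          intro c
          ext H
          rw [Finset.mem_filter, mem_blockFinset, mem_blockFinset, blockIn_Kc_iff]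
          constructor
          · rintro ⟨hH, rfl⟩
            obtain ⟨c₀, hc₀⟩ := hBsub H hH
            have := hgspec H hH c₀ hc₀
            exact ⟨hH, this ▸ hc₀⟩
          · rintro ⟨hH, hsub⟩
            exact ⟨hH, hgspec H hH c hsub⟩
        have hIH : ∀ c, ∑ H ∈ blockFinset (Kc K v c), (H.verts.ncard - 1) =
            (Sc K v c).ncard - 1 := by
          intro c
          have hlt := Sc_ncard_lt hv c
          exact ih (Kc K v c) (show (Sc K v c).ncard ≤ n by omega) (Kc_connected hK v c)
        calc ∑ c, ∑ H ∈ (blockFinset K).filter (fun H => g H = c), (H.verts.ncard - 1)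
            = ∑ c, ((Sc K v c).ncard - 1) := by
              refine Finset.sum_congr rfl fun c _ => ?_
              rw [hfib c, hIH c]
          _ = K.verts.ncard - 1 := sum_Sc_ncard K v
      · push_neg at hcut
        have hKbic : K.Biconnected := by
          refine ⟨hK, ?_, hcut⟩
          obtain ⟨a, b, ha, hb, hab⟩ := Set.one_lt_ncard_iff (Set.toFinite _) |>.1 hsmall
          exact edge_of_connected hK (a := ⟨a, ha⟩) (b := ⟨b, hb⟩)
            (fun h => hab (congrArg Subtype.val h))
        have : blockFinset K = {K} := by
          ext H
          rw [mem_blockFinset, Finset.mem_singleton, blockIn_self hKbic]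
        rw [this, Finset.sum_singleton]

end BlockProof

namespace BlockProof
open SimpleGraph

variable {V : Type*} {G : SimpleGraph V}

instance finiteSubgraph [Finite V] : Finite G.Subgraph := by
  have : Function.Injective (fun H : G.Subgraph => (H.verts, H.Adj)) := by
    intro H₁ H₂ h
    simp only [Prod.mk.injEq] at h
    exact Subgraph.ext h.1 h.2
  exact Finite.of_injective _ this

lemma subgraphOfAdj_biconnected {a b : V} (hab : G.Adj a b) :
    (G.subgraphOfAdj hab).Biconnected := by
  refine ⟨(Subgraph.subgraphOfAdj_connected hab).coe, ⟨s(a,b), by simp⟩, ?_⟩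
  rintro v ⟨x, y, hx, hy, -, hnr⟩
  apply hnr
  have : x = y := by
    have hx' := x.2; have hy' := y.2; have hv' := v.2
    simp only [subgraphOfAdj_verts, Set.mem_insert_iff, Set.mem_singleton_iff] at hx' hy' hv'
    have hxv : (x : V) ≠ (v : V) := fun h => hx (Subtype.ext h)
    have hyv : (y : V) ≠ (v : V) := fun h => hy (Subtype.ext h)
    apply Subtype.ext
    rcases hv' with h3 | h3 <;> rw [h3] at hxv hyv
    · have h1 : (x : V) = b := hx'.resolve_left hxv
      have h2 : (y : V) = b := hy'.resolve_left hyv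
      rw [h1, h2]
    · have h1 : (x : V) = a := hx'.resolve_right hxv
      have h2 : (y : V) = a := hy'.resolve_right hyv
      rw [h1, h2]
  subst this
  rfl

lemma exists_block_above [Finite V] {H₀ : G.Subgraph} (h₀ : H₀.Biconnected) :
    ∃ H, G.IsBlock H ∧ H₀ ≤ H := by
  obtain ⟨H, hH, hmax⟩ := Set.Finite.exists_maximalFor id {H | H.Biconnected ∧ H₀ ≤ H}
    (Set.toFinite _) ⟨H₀, h₀, le_rfl⟩
  exact ⟨H, ⟨hH.1, fun H' hH' hle => le_antisymm (hmax (j := H') ⟨hH', hH.2.trans hle⟩ hle) hle⟩, hH.2⟩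

lemma iInf_blocks [Finite V] (d : ℕ) (hG : G.Connected)
    (B : Finset G.Subgraph) (hB : ∀ H : G.Subgraph, H ∈ B ↔ G.IsBlock H) :
    (⨅ H ∈ B, diagSubmodule d H.verts) = diagSubmodule d (Set.univ : Set V) := by
  apply le_antisymm
  · intro x hx
    simp only [Submodule.mem_iInf] at hx
    have hedge : ∀ a b : V, G.Adj a b → x a = x b := by
      intro a b hab
      obtain ⟨H, hblock, hle⟩ := exists_block_above (subgraphOfAdj_biconnected hab)
      have haH : a ∈ H.verts := hle.1 (by simp)
      have hbH : b ∈ H.verts := hle.1 (by simp)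
      exact hx H ((hB H).2 hblock) a haH b hbH
    have hwalk : ∀ {a b : V}, G.Walk a b → x a = x b := by
      intro a b w
      induction w with
      | nil => rfl
      | cons h _ ih => exact (hedge _ _ h).trans ih
    intro i _ j _
    obtain ⟨w⟩ := hG.preconnected i j
    exact hwalk w
  · apply le_iInf₂
    intro H _
    intro x hx i hi j hj
    exact hx i trivial j trivial

lemma diag_finrank (d : ℕ) [Nonempty V] :
    Module.finrank ℝ ↥(diagSubmodule d (Set.univ : Set V)) = d := by
  classical
  let v₀ : V := Classical.arbitrary V
  let e : ↥(diagSubmodule d (Set.univ : Set V)) ≃ₗ[ℝ] EuclideanSpace ℝ (Fin d) :=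
    { toFun := fun x => x.1 v₀
      map_add' := fun x y => rfl
      map_smul' := fun c x => rfl
      invFun := fun y => ⟨fun _ => y, fun i _ j _ => rfl⟩
      left_inv := by
        rintro ⟨x, hx⟩
        apply Subtype.ext
        funext i
        exact (hx v₀ trivial i trivial)
      right_inv := fun y => rfl }
  rw [e.finrank_eq, finrank_euclideanSpace_fin]

lemma isBlock_iff_blockIn_top {H : G.Subgraph} : G.IsBlock H ↔ BlockIn ⊤ H :=
  ⟨fun ⟨h1, h2⟩ => ⟨h1, le_top, fun H' hb' _ hle => h2 H' hb' hle⟩,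
   fun ⟨h1, _, h3⟩ => ⟨h1, fun H' hb' hle => h3 H' hb' le_top hle⟩⟩

lemma top_coe_connected (hG : G.Connected) : (⊤ : G.Subgraph).coe.Connected := by
  rw [connected_iff]
  constructor
  · exact (Subgraph.topIso (G := G)).preconnected_iff.2 hG.preconnected
  · have : Nonempty V := hG.nonempty
    exact ⟨⟨Classical.arbitrary V, trivial⟩⟩

end BlockProof

open Finset in
/-- The diagonals corresponding to the blocks of a connected graph `Γ` on `n` vertices
intersect transversely in `(ℝ^d)^n`: the codimension of their intersection equals the sum
of their codimensions `(nᵢ − 1)·d`. -/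
theorem block_diagonals_transverse {V : Type*} [Fintype V] (G : SimpleGraph V) (d : ℕ)
    (hG : G.Connected) (hV : Nontrivial V)
    (B : Finset G.Subgraph) (hB : ∀ H : G.Subgraph, H ∈ B ↔ G.IsBlock H) :
    Fintype.card V * d - Module.finrank ℝ ↥(⨅ H ∈ B, diagSubmodule d H.verts) =
      ∑ H ∈ B, (H.verts.ncard - 1) * d := by
  classical
  haveI : Nontrivial V := hV
  haveI : Nonempty V := ⟨Classical.arbitrary V⟩
  have hB' : B = BlockProof.blockFinset (⊤ : G.Subgraph) := Finset.ext fun H => by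
    rw [hB, BlockProof.mem_blockFinset, BlockProof.isBlock_iff_blockIn_top]
  have hsum : ∑ H ∈ B, (H.verts.ncard - 1) = Fintype.card V - 1 := by
    rw [hB']
    have h := BlockProof.sum_blockIn (G := G) ((⊤ : G.Subgraph).verts.ncard) ⊤ le_rfl
      (BlockProof.top_coe_connected hG)
    rw [h]
    congr 1
    show (Set.univ : Set V).ncard = Fintype.card V
    rw [Set.ncard_univ, Nat.card_eq_fintype_card]
  rw [BlockProof.iInf_blocks d hG B hB, BlockProof.diag_finrank d, ← Finset.sum_mul, hsum,
    Nat.sub_one_mul]
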